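/- Let R be a Noetherian ring, σ an automorphism of R, δ a σ-derivation, and A = R[x; σ, δ] the Ore extension. If I is a σ- and δ-invariant ideal of R whose Rees ring R ⊕ ⊕_{n≥1} Iⁿtⁿ ⊆ R[t] is Noetherian, then the Rees ring of the ideal IA of A is Noetherian; in fact it is isomorphic to the Ore extension (Rees ring of I)[x; σ, δ]. -/

import Mathlib

/-- The Rees ring of an ideal `I` of `A`: the subring of the polynomial
ring `A[t]` generated by `A + I·t`. -/
noncomputable def ReesRing (A : Type*) [Ring A] (I : Ideal A) : Subring (Polynomial A) :=
  Subring.closure (Set.range (Polynomial.C : A →+* Polynomial A) ∪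
    {p : Polynomial A | ∃ a ∈ I, p = Polynomial.C a * Polynomial.X})

/-- `A` is an Ore extension `R[x;σ,δ]` of `R` (via the embedding `ι`):
the defining relation `x·r = σ(r)·x + δ(r)` holds and every element of `A`
is uniquely a left `R`-linear combination of the powers of `x`. -/
def IsOreExtension {R A : Type*} [Ring R] [Ring A] (σ : R →+* R) (δ : R →+ R)
    (ι : R →+* A) (x : A) : Prop :=
  Function.Injective ι ∧ (∀ r : R, x * ι r = ι (σ r) * x + ι (δ r)) ∧
  ∀ a : A, ∃! c : ℕ →₀ R, a = c.sum fun n r => ι r * x ^ n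

section OreCoords

variable {S B : Type*} [Ring S] [Ring B] {ι : S →+* B} {x : B}

variable (hrep : ∀ b : B, ∃! c : ℕ →₀ S, b = c.sum fun n s => ι s * x ^ n)

noncomputable def oreCoords (b : B) : ℕ →₀ S := (hrep b).exists.choose

lemma oreCoords_spec (b : B) :
    b = (oreCoords hrep b).sum fun n s => ι s * x ^ n := (hrep b).exists.choose_spec

lemma oreCoords_unique {b : B} {c : ℕ →₀ S} (h : b = c.sum fun n s => ι s * x ^ n) :
    oreCoords hrep b = c :=
  (hrep b).unique (oreCoords_spec hrep b) h

lemma oreCoords_zero : oreCoords hrep (0 : B) = 0 :=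
  oreCoords_unique hrep (by simp)

lemma oreCoords_add (a b : B) :
    oreCoords hrep (a + b) = oreCoords hrep a + oreCoords hrep b := by
  refine oreCoords_unique hrep ?_
  rw [Finsupp.sum_add_index (by simp) (by intro n _ r s; rw [map_add, add_mul])]
  rw [← oreCoords_spec hrep a, ← oreCoords_spec hrep b]

noncomputable def oreCoordsHom : B →+ (ℕ →₀ S) where
  toFun := oreCoords hrep
  map_zero' := oreCoords_zero hrep
  map_add' := oreCoords_add hrep

lemma oreCoords_single (s : S) (n : ℕ) :
    oreCoords hrep (ι s * x ^ n) = Finsupp.single n s :=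
  oreCoords_unique hrep (by rw [Finsupp.sum_single_index (by simp)])

lemma oreCoords_iota_mul (s : S) (b : B) (m : ℕ) :
    oreCoords hrep (ι s * b) m = s * oreCoords hrep b m := by
  have : oreCoords hrep (ι s * b)
      = (oreCoords hrep b).mapRange (s * ·) (mul_zero s) := by
    refine oreCoords_unique hrep ?_
    rw [Finsupp.sum_mapRange_index (by simp)]
    conv_lhs => rw [oreCoords_spec hrep b, Finsupp.mul_sum]
    exact Finsupp.sum_congr fun n _ => by rw [map_mul, mul_assoc]
  rw [this, Finsupp.mapRange_apply]

lemma oreCoords_eq_zero_of_notmem {b : B} {m : ℕ}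
    (h : m ∉ (oreCoords hrep b).support) : oreCoords hrep b m = 0 :=
  Finsupp.notMem_support_iff.mp h

variable {σ : S ≃+* S} {δ : S →+ S}

lemma oreCoords_x_mul (hx : ∀ s : S, x * ι s = ι (σ s) * x + ι (δ s)) (b : B) :
    oreCoords hrep (x * b) =
      Finsupp.mapDomain (· + 1) ((oreCoords hrep b).mapRange σ (map_zero σ))
        + (oreCoords hrep b).mapRange δ (map_zero δ) := by
  refine oreCoords_unique hrep ?_
  rw [Finsupp.sum_add_index (by simp) (by intro n _ r s; rw [map_add, add_mul])]
  rw [Finsupp.sum_mapDomain_index (by simp) (by intro n r s; rw [map_add, add_mul])]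
  rw [Finsupp.sum_mapRange_index (by simp), Finsupp.sum_mapRange_index (by simp)]
  rw [← Finsupp.sum_add]
  conv_lhs => rw [oreCoords_spec hrep b, Finsupp.mul_sum]
  refine Finsupp.sum_congr fun n _ => ?_
  rw [← mul_assoc, hx, add_mul, mul_assoc, ← pow_succ']

lemma oreCoords_x_mul_succ (hx : ∀ s : S, x * ι s = ι (σ s) * x + ι (δ s)) (b : B) (m : ℕ) :
    oreCoords hrep (x * b) (m + 1) =
      σ (oreCoords hrep b m) + δ (oreCoords hrep b (m + 1)) := by
  rw [oreCoords_x_mul hrep hx b]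
  rw [Finsupp.add_apply, Finsupp.mapRange_apply]
  congr 1
  rw [show (m + 1) = (fun n => n + 1) m from rfl,
    Finsupp.mapDomain_apply (fun a b => by omega), Finsupp.mapRange_apply]

lemma oreCoords_x_mul_zero (hx : ∀ s : S, x * ι s = ι (σ s) * x + ι (δ s)) (b : B) :
    oreCoords hrep (x * b) 0 = δ (oreCoords hrep b 0) := by
  rw [oreCoords_x_mul hrep hx b, Finsupp.add_apply, Finsupp.mapRange_apply]
  rw [Finsupp.mapDomain_notin_range _ _ (by simp), zero_add]

lemma oreCoords_pow_mul (hx : ∀ s : S, x * ι s = ι (σ s) * x + ι (δ s)) (j : ℕ) (b : B) (n : ℕ)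
    (h : ∀ m, n < m → oreCoords hrep b m = 0) :
    (∀ m, n + j < m → oreCoords hrep (x ^ j * b) m = 0) ∧
      oreCoords hrep (x ^ j * b) (n + j) = (σ ^ j : S ≃+* S) (oreCoords hrep b n) := by
  induction j with
  | zero =>
    refine ⟨by simpa using h, ?_⟩
    simp only [pow_zero, one_mul]
    rfl
  | succ j ih =>
    have hx1 : x ^ (j + 1) * b = x * (x ^ j * b) := by rw [pow_succ', mul_assoc]
    constructor
    · intro m hm
      match m, hm with
      | m + 1, hm =>
        rw [hx1, oreCoords_x_mul_succ hrep hx]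
        rw [ih.1 m (by omega), ih.1 (m+1) (by omega), map_zero, map_zero, add_zero]
    · rw [hx1, show n + (j+1) = (n + j) + 1 from rfl, oreCoords_x_mul_succ hrep hx,
        ih.2, ih.1 (n+j+1) (by omega), map_zero, add_zero]
      rw [show (σ ^ (j+1) : S ≃+* S) = σ * σ ^ j from pow_succ' σ j]
      rfl

end OreCoords
theorem ore_hbt {S B : Type*} [Ring S] [Ring B] [IsNoetherianRing S]
    (σ : S ≃+* S) (δ : S →+ S) (ι : S →+* B) (x : B)
    (hx : ∀ s : S, x * ι s = ι (σ s) * x + ι (δ s))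
    (hrep : ∀ b : B, ∃! c : ℕ →₀ S, b = c.sum fun n s => ι s * x ^ n) :
    IsNoetherianRing B := by
  classical
  rw [isNoetherianRing_iff, isNoetherian_def]
  intro L
  let Lead : ℕ → Ideal S := fun n =>
    { carrier := {s | ∃ b ∈ L, (∀ m, n < m → oreCoords hrep b m = 0) ∧ oreCoords hrep b n = s}
      add_mem' := by
        rintro a b ⟨p, hp, hp2, rfl⟩ ⟨q, hq, hq2, rfl⟩
        refine ⟨p + q, L.add_mem hp hq, fun m hm => ?_, ?_⟩ <;>
          rw [oreCoords_add hrep, Finsupp.add_apply]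
        · rw [hp2 m hm, hq2 m hm, add_zero]
      zero_mem' := ⟨0, L.zero_mem, fun m _ => by rw [oreCoords_zero hrep]; rfl,
        by rw [oreCoords_zero hrep]; rfl⟩
      smul_mem' := by
        rintro u s ⟨p, hp, hp2, rfl⟩
        refine ⟨ι u * p, by simpa using L.smul_mem (ι u) hp, fun m hm => ?_, ?_⟩ <;>
          rw [oreCoords_iota_mul hrep]
        · rw [hp2 m hm, mul_zero]
        · rfl }
  have mem_Lead : ∀ {n : ℕ} {s : S}, s ∈ Lead n ↔
      ∃ b ∈ L, (∀ m, n < m → oreCoords hrep b m = 0) ∧ oreCoords hrep b n = s :=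
    fun {n s} => Iff.rfl
  have sigma_Lead : ∀ n s, s ∈ Lead n → σ s ∈ Lead (n + 1) := by
    rintro n s hs
    obtain ⟨b, hb, hb2, rfl⟩ := mem_Lead.mp hs
    refine mem_Lead.mpr ⟨x * b, by simpa using L.smul_mem x hb, fun m hm => ?_, ?_⟩
    · match m, hm with
      | m + 1, hm =>
        rw [oreCoords_x_mul_succ hrep hx, hb2 m (by omega), hb2 (m+1) (by omega),
          map_zero, map_zero, add_zero]
    · rw [oreCoords_x_mul_succ hrep hx, hb2 (n+1) (by omega), map_zero, add_zero]
  have mono : Monotone (fun n => (Lead n).comap ((σ ^ n : S ≃+* S) : S →+* S)) := by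
    refine monotone_nat_of_le_succ fun n s hs => ?_
    rw [Ideal.mem_comap] at hs ⊢
    have : ((σ ^ (n+1) : S ≃+* S) : S →+* S) s = σ (((σ ^ n : S ≃+* S) : S →+* S) s) := by
      rw [show (σ ^ (n+1) : S ≃+* S) = σ * σ ^ n from pow_succ' σ n]; rfl
    rw [this]
    exact sigma_Lead n _ hs
  obtain ⟨N, hN⟩ := monotone_stabilizes_iff_noetherian.mpr inferInstance
    ⟨fun n => (Lead n).comap ((σ ^ n : S ≃+* S) : S →+* S), mono⟩
  have stable : ∀ k, N ≤ k → ∀ s ∈ Lead k,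
      ∃ s₀ ∈ Lead N, (σ ^ (k - N) : S ≃+* S) s₀ = s := by
    intro k hk s hs
    set u := ((σ ^ k : S ≃+* S)).symm s with hu
    have hcoe : ((σ ^ k : S ≃+* S) : S →+* S) u = s := by
      simp [hu]
    have hu1 : u ∈ (Lead k).comap ((σ ^ k : S ≃+* S) : S →+* S) :=
      Ideal.mem_comap.mpr (by rw [hcoe]; exact hs)
    have heq : (Lead N).comap ((σ ^ N : S ≃+* S) : S →+* S)
        = (Lead k).comap ((σ ^ k : S ≃+* S) : S →+* S) := hN k hk
    rw [← heq, Ideal.mem_comap] at hu1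
    refine ⟨(σ ^ N : S ≃+* S) u, hu1, ?_⟩
    have h2 : ((σ ^ (k - N) : S ≃+* S)) ((σ ^ N : S ≃+* S) u) = (σ ^ k : S ≃+* S) u := by
      rw [show (σ ^ k : S ≃+* S) = σ ^ (k - N) * σ ^ N by
        rw [← pow_add, Nat.sub_add_cancel hk]]
      rfl
    rw [h2, hu, RingEquiv.apply_symm_apply]
  -- finite generators of the leading ideals, with representatives in L
  have hfg : ∀ n, ∃ T : Finset S, Submodule.span S (T : Set S) = Lead n :=
    fun n => IsNoetherian.noetherian (Lead n)
  choose T hT using hfg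
  let repb : ℕ → S → B := fun n t =>
    if h : ∃ b, b ∈ L ∧ (∀ m, n < m → oreCoords hrep b m = 0) ∧ oreCoords hrep b n = t
    then h.choose else 0
  have hrepP : ∀ n t, t ∈ Lead n → repb n t ∈ L ∧
      (∀ m, n < m → oreCoords hrep (repb n t) m = 0) ∧ oreCoords hrep (repb n t) n = t := by
    intro n t ht
    obtain ⟨b, hb, hb2, hb3⟩ := mem_Lead.mp ht
    have hex : ∃ b, b ∈ L ∧ (∀ m, n < m → oreCoords hrep b m = 0) ∧ oreCoords hrep b n = t :=
      ⟨b, hb, hb2, hb3⟩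
    simpa only [repb, dif_pos hex] using hex.choose_spec
  have hTsub : ∀ n, (T n : Set S) ⊆ Lead n := by
    intro n
    rw [← hT n]
    exact Submodule.subset_span
  set GG : Set B := ⋃ n ∈ Finset.range (N + 1), (repb n) '' (T n : Set S) with hGG
  have hGGfin : GG.Finite :=
    Set.Finite.biUnion (Finset.range (N+1)).finite_toSet
      (fun n _ => ((T n).finite_toSet.image _))
  have hGGmem : ∀ n, n ≤ N → ∀ t ∈ T n, repb n t ∈ GG := by
    intro n hn t ht
    exact Set.mem_biUnion (Finset.mem_range.mpr (by omega)) ⟨t, ht, rfl⟩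
  -- a convenient expression of the sum used in both cases
  have hsum : ∀ (n : ℕ), n ≤ N → ∀ s ∈ Lead n,
      ∃ w : B, w ∈ L ∧ w ∈ Submodule.span B GG ∧
        (∀ m, n < m → oreCoords hrep w m = 0) ∧ oreCoords hrep w n = s := by
    intro n hn s hs
    rw [← hT n] at hs
    obtain ⟨f, -, hf⟩ := Submodule.mem_span_finset.mp hs
    refine ⟨∑ t ∈ T n, ι (f t) * repb n t, ?_, ?_, ?_, ?_⟩
    · exact Submodule.sum_mem _ fun t ht => by
        simpa using L.smul_mem (ι (f t)) (hrepP n t (hTsub n ht)).1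
    · exact Submodule.sum_mem _ fun t ht => by
        simpa using Submodule.smul_mem _ (ι (f t))
          (Submodule.subset_span (hGGmem n hn t ht))
    · intro m hm
      have hms : oreCoords hrep (∑ t ∈ T n, ι (f t) * repb n t)
          = ∑ t ∈ T n, oreCoords hrep (ι (f t) * repb n t) :=
        map_sum (oreCoordsHom hrep) _ _
      rw [hms, Finsupp.finset_sum_apply]
      refine Finset.sum_eq_zero fun t ht => ?_
      rw [oreCoords_iota_mul hrep, (hrepP n t (hTsub n ht)).2.1 m hm, mul_zero]
    · have hms : oreCoords hrep (∑ t ∈ T n, ι (f t) * repb n t)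
          = ∑ t ∈ T n, oreCoords hrep (ι (f t) * repb n t) :=
        map_sum (oreCoordsHom hrep) _ _
      rw [hms, Finsupp.finset_sum_apply, ← hf]
      refine Finset.sum_congr rfl fun t ht => ?_
      rw [oreCoords_iota_mul hrep, (hrepP n t (hTsub n ht)).2.2, smul_eq_mul]
  have key : ∀ k, ∀ b ∈ L, (∀ m, k ≤ m → oreCoords hrep b m = 0) →
      b ∈ Submodule.span B GG := by
    intro k
    induction k with
    | zero =>
      intro b hb h0
      have hc : oreCoords hrep b = 0 := Finsupp.ext fun m => h0 m (Nat.zero_le m)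
      have : b = 0 := by rw [oreCoords_spec hrep b, hc, Finsupp.sum_zero_index]
      rw [this]
      exact Submodule.zero_mem _
    | succ k ih =>
      intro b hb hbk
      have hs : oreCoords hrep b k ∈ Lead k :=
        mem_Lead.mpr ⟨b, hb, fun m hm => hbk m (by omega), rfl⟩
      by_cases hk : k ≤ N
      · obtain ⟨w, hwL, hwG, hw2, hw3⟩ := hsum k hk _ hs
        have hsub : ∀ m, k ≤ m → oreCoords hrep (b - w) m = 0 := by
          intro m hm
          have hms : oreCoords hrep (b - w) = oreCoords hrep b - oreCoords hrep w :=
            map_sub (oreCoordsHom hrep) b w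
          rw [hms, Finsupp.sub_apply]
          rcases eq_or_lt_of_le hm with h | h
          · rw [← h, hw3, sub_self]
          · rw [hbk m (by omega), hw2 m h, sub_zero]
        have := ih (b - w) (L.sub_mem hb hwL) hsub
        have hbw : b = (b - w) + w := by abel
        rw [hbw]
        exact Submodule.add_mem _ this hwG
      · push_neg at hk
        obtain ⟨s₀, hs₀, hss⟩ := stable k (by omega) _ hs
        obtain ⟨w, hwL, hwG, hw2, hw3⟩ := hsum N le_rfl _ hs₀
        have hpow := oreCoords_pow_mul hrep hx (k - N) w N hw2
        have hNk : N + (k - N) = k := by omega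
        set w' := x ^ (k - N) * w with hw'
        have hw'L : w' ∈ L := by simpa [hw'] using L.smul_mem (x ^ (k - N)) hwL
        have hw'G : w' ∈ Submodule.span B GG := by
          simpa [hw'] using Submodule.smul_mem _ (x ^ (k - N)) hwG
        have hw'2 : ∀ m, k < m → oreCoords hrep w' m = 0 := by
          intro m hm
          exact hpow.1 m (by omega)
        have hw'3 : oreCoords hrep w' k = oreCoords hrep b k := by
          have := hpow.2
          rw [hNk] at this
          rw [this, hw3, hss]
        have hsub : ∀ m, k ≤ m → oreCoords hrep (b - w') m = 0 := by
          intro m hm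
          have hms : oreCoords hrep (b - w') = oreCoords hrep b - oreCoords hrep w' :=
            map_sub (oreCoordsHom hrep) b w'
          rw [hms, Finsupp.sub_apply]
          rcases eq_or_lt_of_le hm with h | h
          · rw [← h, hw'3, sub_self]
          · rw [hbk m (by omega), hw'2 m h, sub_zero]
        have := ih (b - w') (L.sub_mem hb hw'L) hsub
        have hbw : b = (b - w') + w' := by abel
        rw [hbw]
        exact Submodule.add_mem _ this hw'G
  refine Submodule.fg_def.mpr ⟨GG, hGGfin, le_antisymm ?_ ?_⟩
  · rw [Submodule.span_le]
    rintro b hbG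
    obtain ⟨n, hn, t, ht, rfl⟩ := by
      simpa only [hGG, Set.mem_iUnion, Set.mem_image, exists_prop] using hbG
    exact (hrepP n t (hTsub n ht)).1
  · intro b hb
    refine key ((oreCoords hrep b).support.sup id + 1) b hb fun m hm => ?_
    refine oreCoords_eq_zero_of_notmem hrep fun hmem => ?_
    have := Finset.le_sup (f := id) hmem
    simp only [id_eq] at this
    omega
open Polynomial in
lemma mem_rees_C {R : Type*} [Ring R] {I : Ideal R} (r : R) :
    (C r : Polynomial R) ∈ ReesRing R I :=
  Subring.subset_closure (Or.inl ⟨r, rfl⟩)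

open Polynomial in
lemma mem_rees_CX {R : Type*} [Ring R] {I : Ideal R} {r : R} (hr : r ∈ I) :
    (C r * X : Polynomial R) ∈ ReesRing R I :=
  Subring.subset_closure (Or.inr ⟨r, hr, rfl⟩)

open Polynomial in
lemma rees_map_mem {R A : Type*} [Ring R] [Ring A] {I : Ideal R} {I' : Ideal A}
    (f : R →+* A) (hf : ∀ a ∈ I, f a ∈ I')
    {p : Polynomial R} (hp : p ∈ ReesRing R I) : p.map f ∈ ReesRing A I' := by
  induction hp using Subring.closure_induction with
  | mem q hq =>
    rcases hq with ⟨r, rfl⟩ | ⟨a, ha, rfl⟩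
    · rw [map_C]; exact mem_rees_C _
    · rw [Polynomial.map_mul, map_C, Polynomial.map_X]; exact mem_rees_CX (hf a ha)
  | zero => rw [Polynomial.map_zero]; exact Subring.zero_mem _
  | one => rw [Polynomial.map_one]; exact Subring.one_mem _
  | add p q hp hq ihp ihq => rw [Polynomial.map_add]; exact Subring.add_mem _ ihp ihq
  | neg p hp ihp => rw [Polynomial.map_neg]; exact Subring.neg_mem _ ihp
  | mul p q hp hq ihp ihq => rw [Polynomial.map_mul]; exact Subring.mul_mem _ ihp ihq

/-- Coefficientwise application of an additive map to a polynomial. -/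
noncomputable def derivePoly {R : Type*} [Ring R] (δ : R →+ R) : Polynomial R →+ Polynomial R where
  toFun p := ⟨.ofCoeff (Finsupp.mapRange δ (map_zero δ) p.toFinsupp.coeff)⟩
  map_zero' := by
    simp only [Polynomial.toFinsupp_zero, AddMonoidAlgebra.coeff_zero, Finsupp.mapRange_zero,
      AddMonoidAlgebra.ofCoeff_zero]
    rfl
  map_add' p q := by
    simp only [Polynomial.toFinsupp_add, AddMonoidAlgebra.coeff_add]
    rw [Finsupp.mapRange_add (map_add δ), AddMonoidAlgebra.ofCoeff_add, ← Polynomial.ofFinsupp_add]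

lemma derivePoly_coeff {R : Type*} [Ring R] (δ : R →+ R) (p : Polynomial R) (k : ℕ) :
    (derivePoly δ p).coeff k = δ (p.coeff k) := rfl

open Polynomial in
lemma derivePoly_mul {R : Type*} [Ring R] (σ : R ≃+* R) (δ : R →+ R)
    (hδ : ∀ a b : R, δ (a * b) = σ a * δ b + δ a * b) (p q : Polynomial R) :
    derivePoly δ (p * q) = p.map (σ : R →+* R) * derivePoly δ q + derivePoly δ p * q := by
  ext k
  rw [derivePoly_coeff, coeff_mul, map_sum δ, coeff_add, coeff_mul, coeff_mul]
  simp_rw [hδ, coeff_map, derivePoly_coeff, RingEquiv.coe_toRingHom]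
  rw [Finset.sum_add_distrib]

lemma delta_one {R : Type*} [Ring R] (σ : R ≃+* R) (δ : R →+ R)
    (hδ : ∀ a b : R, δ (a * b) = σ a * δ b + δ a * b) : δ 1 = 0 := by
  have h := hδ 1 1
  simp only [mul_one, one_mul, map_one] at h
  exact (left_eq_add.mp h)

open Polynomial in
lemma rees_derive_mem {R : Type*} [Ring R] (σ : R ≃+* R) (δ : R →+ R)
    (hδ : ∀ a b : R, δ (a * b) = σ a * δ b + δ a * b) {I : Ideal R}
    (hσI : ∀ a ∈ I, σ a ∈ I) (hδI : ∀ a ∈ I, δ a ∈ I)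
    {p : Polynomial R} (hp : p ∈ ReesRing R I) : derivePoly δ p ∈ ReesRing R I := by
  induction hp using Subring.closure_induction with
  | mem q hq =>
    rcases hq with ⟨r, rfl⟩ | ⟨a, ha, rfl⟩
    · have : derivePoly δ (C r) = C (δ r) := by
        ext k; simp [derivePoly_coeff, coeff_C, apply_ite δ]
      rw [this]; exact mem_rees_C _
    · have : derivePoly δ (C a * X) = C (δ a) * X := by
        ext k
        simp [derivePoly_coeff, coeff_C_mul, Polynomial.coeff_X, apply_ite δ, mul_ite,
          mul_one, mul_zero]
      rw [this]; exact mem_rees_CX (hδI a ha)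
  | zero => rw [map_zero]; exact Subring.zero_mem _
  | one =>
    have : derivePoly δ (1 : Polynomial R) = 0 := by
      ext k
      simp [derivePoly_coeff, coeff_one, apply_ite δ, delta_one σ δ hδ]
    rw [this]; exact Subring.zero_mem _
  | add p q hp hq ihp ihq => rw [map_add]; exact Subring.add_mem _ ihp ihq
  | neg p hp ihp => rw [map_neg]; exact Subring.neg_mem _ ihp
  | mul p q hp hq ihp ihq =>
    rw [derivePoly_mul σ δ hδ]
    exact Subring.add_mem _ (Subring.mul_mem _ (rees_map_mem _ hσI hp) ihq)
      (Subring.mul_mem _ ihp hq)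

/-- The map between Rees rings induced by a coefficient map respecting the ideals. -/
noncomputable def reesMap {R A : Type*} [Ring R] [Ring A] (I : Ideal R) (I' : Ideal A)
    (f : R →+* A) (hf : ∀ a ∈ I, f a ∈ I') : ReesRing R I →+* ReesRing A I' :=
  RingHom.codRestrict ((Polynomial.mapRingHom f).comp (Subring.subtype _)) _
    (fun p => rees_map_mem f hf p.2)

lemma reesMap_coe {R A : Type*} [Ring R] [Ring A] (I : Ideal R) (I' : Ideal A)
    (f : R →+* A) (hf : ∀ a ∈ I, f a ∈ I') (p : ReesRing R I) :
    (reesMap I I' f hf p : Polynomial A) = (p : Polynomial R).map f := rfl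

/-- The additive map between Rees rings induced by a `σ`-derivation. -/
noncomputable def reesDelta {R : Type*} [Ring R] (I : Ideal R) (σ : R ≃+* R) (δ : R →+ R)
    (hδ : ∀ a b : R, δ (a * b) = σ a * δ b + δ a * b)
    (hσI : ∀ a ∈ I, σ a ∈ I) (hδI : ∀ a ∈ I, δ a ∈ I) : ReesRing R I →+ ReesRing R I where
  toFun p := ⟨derivePoly δ p, rees_derive_mem σ δ hδ hσI hδI p.2⟩
  map_zero' := Subtype.ext (map_zero (derivePoly δ))
  map_add' p q := Subtype.ext (map_add (derivePoly δ) (p : Polynomial R) (q : Polynomial R))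
set_option maxHeartbeats 1600000 in
set_option synthInstance.maxHeartbeats 200000 in
open Polynomial in
theorem stmt11 (R A : Type*) [Ring R] [IsNoetherianRing R] [Ring A]
    (σ : R ≃+* R) (δ : R →+ R)
    (hδ : ∀ a b : R, δ (a * b) = σ a * δ b + δ a * b)
    (ι : R →+* A) (x : A) (hOre : IsOreExtension (σ : R →+* R) δ ι x)
    (I : Ideal R) (hItwoSided : ∀ a ∈ I, ∀ b : R, a * b ∈ I)
    (hσI : ∀ a ∈ I, σ a ∈ I) (hδI : ∀ a ∈ I, δ a ∈ I)
    (hRees : IsNoetherianRing (ReesRing R I)) :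
    IsNoetherianRing (ReesRing A (Ideal.map ι I)) ∧
    ∃ (σ' : ReesRing R I →+* ReesRing R I) (δ' : ReesRing R I →+ ReesRing R I)
      (ι' : ReesRing R I →+* ReesRing A (Ideal.map ι I)) (X : ReesRing A (Ideal.map ι I)),
      (∀ (p : ReesRing R I) (k : ℕ),
        ((σ' p : Polynomial R)).coeff k = σ ((p : Polynomial R).coeff k)) ∧
      (∀ (p : ReesRing R I) (k : ℕ),
        ((δ' p : Polynomial R)).coeff k = δ ((p : Polynomial R).coeff k)) ∧
      (∀ (p : ReesRing R I) (k : ℕ),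
        ((ι' p : Polynomial A)).coeff k = ι ((p : Polynomial R).coeff k)) ∧
      (X : Polynomial A) = Polynomial.C x ∧
      (∀ a b : ReesRing R I, δ' (a * b) = σ' a * δ' b + δ' a * b) ∧
      IsOreExtension σ' δ' ι' X := by
  classical
  obtain ⟨hinj, hrel, hrepA⟩ := hOre
  haveI := hRees
  -- σ⁻¹ preserves I (uses Noetherianity of R)
  have hσinvI : ∀ a ∈ I, σ.symm a ∈ I := by
    have mono : Monotone (fun n => I.comap ((σ ^ n : R ≃+* R) : R →+* R)) := by
      refine monotone_nat_of_le_succ fun n r hr => ?_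
      rw [Ideal.mem_comap] at hr ⊢
      have h1 : ((σ ^ (n+1) : R ≃+* R) : R →+* R) r = σ (((σ ^ n : R ≃+* R) : R →+* R) r) := by
        rw [show (σ ^ (n+1) : R ≃+* R) = σ * σ ^ n from pow_succ' σ n]; rfl
      rw [h1]; exact hσI _ hr
    obtain ⟨N, hN⟩ := monotone_stabilizes_iff_noetherian.mpr inferInstance ⟨_, mono⟩
    intro a ha
    set u := ((σ ^ (N+1) : R ≃+* R)).symm a with hu
    have hu1 : u ∈ I.comap ((σ ^ (N+1) : R ≃+* R) : R →+* R) := by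
      rw [Ideal.mem_comap]
      show (σ ^ (N+1) : R ≃+* R) u ∈ I
      rw [hu, RingEquiv.apply_symm_apply]; exact ha
    have heq : I.comap ((σ ^ N : R ≃+* R) : R →+* R)
        = I.comap ((σ ^ (N+1) : R ≃+* R) : R →+* R) := hN (N+1) (by omega)
    rw [← heq, Ideal.mem_comap] at hu1
    have h2 : σ ((σ ^ N : R ≃+* R) u) = a := by
      have h3 : (σ * σ ^ N : R ≃+* R) u = a := by
        rw [← pow_succ' σ N, hu, RingEquiv.apply_symm_apply]
      exact h3
    have h4 : σ.symm a = (σ ^ N : R ≃+* R) u := by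
      rw [← h2, RingEquiv.symm_apply_apply]
    rw [h4]; exact hu1
  -- coordinates of elements of `Ideal.map ι I` all lie in `I`
  have hVx : ∀ a : A, (∀ n, oreCoords hrepA a n ∈ I) →
      ∀ n, oreCoords hrepA (x * a) n ∈ I := by
    intro a ha n
    cases n with
    | zero => rw [oreCoords_x_mul_zero hrepA hrel]; exact hδI _ (ha 0)
    | succ m =>
      rw [oreCoords_x_mul_succ hrepA hrel]
      exact I.add_mem (hσI _ (ha m)) (hδI _ (ha (m+1)))
  have hVpow : ∀ (j : ℕ) (a : A), (∀ n, oreCoords hrepA a n ∈ I) →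
      ∀ n, oreCoords hrepA (x ^ j * a) n ∈ I := by
    intro j
    induction j with
    | zero => intro a ha n; simpa using ha n
    | succ j ih =>
      intro a ha n
      rw [pow_succ', mul_assoc]
      exact hVx _ (ih a ha) n
  have hJcoords : ∀ a ∈ Ideal.map ι I, ∀ n, oreCoords hrepA a n ∈ I := by
    intro a ha
    refine Submodule.span_induction ?_ ?_ ?_ ?_ ha
    · rintro _ ⟨r, hr, rfl⟩ n
      rw [show (ι r : A) = ι r * x ^ 0 by simp, oreCoords_single hrepA]
      rcases eq_or_ne n 0 with rfl | hne
      · rwa [Finsupp.single_eq_same]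
      · rw [Finsupp.single_eq_of_ne' (Ne.symm hne)]; exact I.zero_mem
    · intro n; rw [oreCoords_zero hrepA]; exact I.zero_mem
    · intro p q _ _ hp hq n
      rw [oreCoords_add hrepA, Finsupp.add_apply]
      exact I.add_mem (hp n) (hq n)
    · intro b a _ ha n
      have hba : b • a = (oreCoords hrepA b).sum fun m s => ι s * (x ^ m * a) := by
        rw [smul_eq_mul]
        conv_lhs => rw [oreCoords_spec hrepA b]
        rw [Finsupp.sum_mul]
        exact Finsupp.sum_congr fun m _ => by rw [mul_assoc]
      have h2 : oreCoords hrepA ((oreCoords hrepA b).sum fun m s => ι s * (x ^ m * a))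
          = (oreCoords hrepA b).sum fun m s => oreCoords hrepA (ι s * (x ^ m * a)) :=
        map_finsuppSum (oreCoordsHom hrepA) _ _
      rw [hba, h2, Finsupp.sum_apply, Finsupp.sum]
      refine Submodule.sum_mem _ fun m hm => ?_
      rw [oreCoords_iota_mul hrepA]
      exact Ideal.mul_mem_left I _ (hVpow m a ha n)
  -- the structural maps
  set S := ReesRing R I with hS
  set J := Ideal.map ι I with hJdef
  set BB := ReesRing A J with hBB
  set σ' : S →+* S := reesMap I I (σ : R →+* R) hσI with hσ'
  set ι' : S →+* BB := reesMap I J ι (fun a ha => Ideal.mem_map_of_mem ι ha) with hι'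
  set δ' : S →+ S := reesDelta I σ δ hδ hσI hδI with hδ'
  set Xb : BB := ⟨C x, mem_rees_C x⟩ with hXb
  have hσ'coe : ∀ p : S, (σ' p : Polynomial R) = (p : Polynomial R).map (σ : R →+* R) :=
    fun p => rfl
  have hι'coe : ∀ p : S, (ι' p : Polynomial A) = (p : Polynomial R).map ι := fun p => rfl
  have hδ'coe : ∀ p : S, (δ' p : Polynomial R) = derivePoly δ (p : Polynomial R) :=
    fun p => rfl
  -- the Ore relation in the Rees ring
  have hrel' : ∀ p : S, Xb * ι' p = ι' (σ' p) * Xb + ι' (δ' p) := by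
    intro p
    apply Subtype.ext
    show (C x) * ((p : Polynomial R).map ι)
      = ((p : Polynomial R).map (σ : R →+* R)).map ι * (C x)
        + (derivePoly δ (p : Polynomial R)).map ι
    ext k
    simp only [coeff_C_mul, coeff_add, coeff_mul_C, coeff_map, derivePoly_coeff]
    exact hrel _
  -- coercion computations
  have hterm : ∀ (p : S) (n : ℕ),
      ((ι' p * Xb ^ n : BB) : Polynomial A) = (p : Polynomial R).map ι * (C x) ^ n := by
    intro p n
    rw [MulMemClass.coe_mul, SubmonoidClass.coe_pow, hι'coe]
  have hcoesum : ∀ c : ℕ →₀ S,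
      ((c.sum fun n p => ι' p * Xb ^ n : BB) : Polynomial A)
        = c.sum fun n p => (p : Polynomial R).map ι * (C x) ^ n := by
    intro c
    show (Subring.subtype BB) (c.sum fun n p => ι' p * Xb ^ n) = _
    rw [map_finsuppSum (Subring.subtype BB)]
    exact Finsupp.sum_congr fun n _ => hterm _ _
  -- the set of elements with a standard representation
  set Rep : AddSubgroup BB :=
    { carrier := {q : BB | ∃ c : ℕ →₀ S, q = c.sum fun n p => ι' p * Xb ^ n}
      zero_mem' := ⟨0, by rw [Finsupp.sum_zero_index]⟩
      add_mem' := by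
        rintro q₁ q₂ ⟨c₁, rfl⟩ ⟨c₂, rfl⟩
        refine ⟨c₁ + c₂, ?_⟩
        rw [Finsupp.sum_add_index (by intro n _; rw [map_zero, zero_mul])
          (by intro n _ p₁ p₂; rw [map_add, add_mul])]
      neg_mem' := by
        rintro q ⟨c, rfl⟩
        refine ⟨-c, ?_⟩
        rw [Finsupp.sum_neg_index (by intro n; rw [map_zero, zero_mul])]
        rw [← Finsupp.sum_neg]
        exact Finsupp.sum_congr fun n _ => by rw [map_neg, neg_mul] } with hRep
  have hsingle : ∀ (p : S) (n : ℕ), (ι' p * Xb ^ n) ∈ Rep :=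
    fun p n => ⟨Finsupp.single n p,
      by rw [Finsupp.sum_single_index (by rw [map_zero, zero_mul])]⟩
  have hXmul : ∀ q ∈ Rep, Xb * q ∈ Rep := by
    rintro q ⟨c, rfl⟩
    rw [Finsupp.mul_sum, Finsupp.sum]
    refine sum_mem fun n _ => ?_
    have h1 : Xb * (ι' (c n) * Xb ^ n) = ι' (σ' (c n)) * Xb ^ (n+1) + ι' (δ' (c n)) * Xb ^ n := by
      rw [← mul_assoc, hrel' (c n), add_mul, mul_assoc, ← pow_succ']
    rw [h1]
    exact Rep.add_mem (hsingle _ _) (hsingle _ _)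
  have hXpow : ∀ (j : ℕ), ∀ q ∈ Rep, Xb ^ j * q ∈ Rep := by
    intro j
    induction j with
    | zero => intro q hq; simpa using hq
    | succ j ih =>
      intro q hq
      rw [pow_succ', mul_assoc]
      exact hXmul _ (ih q hq)
  have hiota : ∀ (p : S), ∀ q ∈ Rep, ι' p * q ∈ Rep := by
    rintro p q ⟨c, rfl⟩
    rw [Finsupp.mul_sum, Finsupp.sum]
    refine sum_mem fun n _ => ?_
    have h1 : ι' p * (ι' (c n) * Xb ^ n) = ι' (p * c n) * Xb ^ n := by
      rw [map_mul, mul_assoc]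
    rw [h1]
    exact hsingle _ _
  have hmulRep : ∀ q₁ ∈ Rep, ∀ q₂ ∈ Rep, q₁ * q₂ ∈ Rep := by
    rintro q₁ ⟨c₁, rfl⟩ q₂ hq₂
    rw [Finsupp.sum_mul, Finsupp.sum]
    refine sum_mem fun n _ => ?_
    rw [mul_assoc]
    exact hiota _ _ (hXpow n q₂ hq₂)
  -- every element has a representation
  have hexist : ∀ q : BB, ∃ c : ℕ →₀ S, q = c.sum fun n p => ι' p * Xb ^ n := by
    rintro ⟨qv, hq⟩
    show (⟨qv, hq⟩ : BB) ∈ Rep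
    induction hq using Subring.closure_induction with
    | mem a ha =>
      rcases ha with ⟨a₀, rfl⟩ | ⟨a₀, ha₀, rfl⟩
      · refine ⟨(oreCoords hrepA a₀).mapRange
            (fun r => (⟨C r, mem_rees_C r⟩ : S)) (Subtype.ext (map_zero C)), ?_⟩
        apply Subtype.ext
        show (C a₀ : Polynomial A) = _
        rw [hcoesum, Finsupp.sum_mapRange_index
          (by intro n; rw [ZeroMemClass.coe_zero, Polynomial.map_zero, zero_mul])]
        conv_lhs => rw [oreCoords_spec hrepA a₀]
        rw [map_finsuppSum (C : A →+* Polynomial A)]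
        refine Finsupp.sum_congr fun n _ => ?_
        rw [map_mul (C : A →+* Polynomial A), map_pow (C : A →+* Polynomial A),
          Polynomial.map_C]
      · have hdI := hJcoords a₀ ha₀
        refine ⟨Finsupp.onFinset (oreCoords hrepA a₀).support
            (fun n => (⟨C (oreCoords hrepA a₀ n) * X, mem_rees_CX (hdI n)⟩ : S))
            (fun n hne => by
              by_contra h
              refine hne (Subtype.ext ?_)
              show (C (oreCoords hrepA a₀ n) * X : Polynomial R) = (0 : S)
              rw [Finsupp.notMem_support_iff.mp h, map_zero, zero_mul]
              rfl), ?_⟩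
        apply Subtype.ext
        show (C a₀ * X : Polynomial A) = _
        rw [hcoesum, Finsupp.onFinset_sum _
          (fun n => by rw [ZeroMemClass.coe_zero, Polynomial.map_zero, zero_mul])]
        have hterm2 : ∀ n, ((C (oreCoords hrepA a₀ n) * X : Polynomial R)).map ι
            * (C x : Polynomial A) ^ n
            = C (ι (oreCoords hrepA a₀ n) * x ^ n) * X := by
          intro n
          rw [Polynomial.map_mul, Polynomial.map_C, Polynomial.map_X, mul_assoc,
            X_mul, ← mul_assoc, ← map_pow (C : A →+* Polynomial A),
            ← map_mul (C : A →+* Polynomial A)]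
        simp only [hterm2]
        rw [← Finset.sum_mul]
        congr 1
        conv_lhs => rw [oreCoords_spec hrepA a₀]
        rw [map_finsuppSum (C : A →+* Polynomial A), Finsupp.sum]
    | zero => exact Rep.zero_mem
    | one => exact (by simpa using hsingle 1 0 : (1 : BB) ∈ Rep)
    | add p q hp hq ihp ihq => exact Rep.add_mem ihp ihq
    | neg p hp ihp => exact Rep.neg_mem ihp
    | mul p q hp hq ihp ihq => exact hmulRep _ ihp _ ihq
  -- uniqueness of representations
  have hcoeff : ∀ (c : ℕ →₀ S) (k : ℕ),
      ((c.sum fun n p => ι' p * Xb ^ n : BB) : Polynomial A).coeff k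
        = ∑ n ∈ c.support, ι ((c n : Polynomial R).coeff k) * x ^ n := by
    intro c k
    rw [hcoesum, Finsupp.sum, Polynomial.finset_sum_coeff]
    refine Finset.sum_congr rfl fun n _ => ?_
    rw [show ((C x : Polynomial A)) ^ n = C (x ^ n) from
      (map_pow (C : A →+* Polynomial A) x n).symm, coeff_mul_C, coeff_map]
  have huniq : ∀ c₁ c₂ : ℕ →₀ S,
      (c₁.sum fun n p => ι' p * Xb ^ n) = (c₂.sum fun n p => ι' p * Xb ^ n) → c₁ = c₂ := by
    intro c₁ c₂ h
    set e : (ℕ →₀ S) → ℕ → (ℕ →₀ R) := fun c k => Finsupp.onFinset c.support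
      (fun n => (c n : Polynomial R).coeff k)
      (fun n hne => by
        by_contra hh
        refine hne ?_
        show ((c n : Polynomial R)).coeff k = 0
        rw [Finsupp.notMem_support_iff.mp hh, ZeroMemClass.coe_zero,
          Polynomial.coeff_zero]) with he
    have hsum1 : ∀ (c : ℕ →₀ S) (k : ℕ),
        ((c.sum fun n p => ι' p * Xb ^ n : BB) : Polynomial A).coeff k
          = (e c k).sum fun n r => ι r * x ^ n := by
      intro c k
      rw [hcoeff c k, he]
      rw [Finsupp.onFinset_sum _ (fun n => by rw [map_zero, zero_mul])]
    have hk : ∀ k n, (c₁ n : Polynomial R).coeff k = (c₂ n : Polynomial R).coeff k := by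
      intro k n
      have hu1 : oreCoords hrepA
          (((c₁.sum fun n p => ι' p * Xb ^ n : BB) : Polynomial A).coeff k) = e c₁ k :=
        oreCoords_unique hrepA (hsum1 c₁ k)
      have hu2 : oreCoords hrepA
          (((c₂.sum fun n p => ι' p * Xb ^ n : BB) : Polynomial A).coeff k) = e c₂ k :=
        oreCoords_unique hrepA (hsum1 c₂ k)
      have he12 : e c₁ k = e c₂ k := by rw [← hu1, ← hu2, h]
      have := congrArg (fun f : ℕ →₀ R => f n) he12
      simpa [he, Finsupp.onFinset_apply] using this
    refine Finsupp.ext fun n => Subtype.ext (Polynomial.ext fun k => hk k n)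
  have hrep' : ∀ b : BB, ∃! c : ℕ →₀ S, b = c.sum fun n p => ι' p * Xb ^ n := by
    intro b
    obtain ⟨c, hc⟩ := hexist b
    exact ⟨c, hc, fun c' hc' => huniq c' c (hc'.symm.trans hc)⟩
  -- σ' is invertible on the Rees ring
  have hcomp1 : (σ : R →+* R).comp (σ.symm : R →+* R) = RingHom.id R := by
    ext r; simp
  have hcomp2 : (σ.symm : R →+* R).comp (σ : R →+* R) = RingHom.id R := by
    ext r; simp
  set σ'' : S ≃+* S := RingEquiv.ofRingHom σ' (reesMap I I (σ.symm : R →+* R) hσinvI)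
    (RingHom.ext fun p => Subtype.ext (by
      show ((p : Polynomial R).map (σ.symm : R →+* R)).map (σ : R →+* R) = (p : Polynomial R)
      rw [Polynomial.map_map, hcomp1, Polynomial.map_id]))
    (RingHom.ext fun p => Subtype.ext (by
      show ((p : Polynomial R).map (σ : R →+* R)).map (σ.symm : R →+* R) = (p : Polynomial R)
      rw [Polynomial.map_map, hcomp2, Polynomial.map_id])) with hσ''
  have hNoeth : IsNoetherianRing BB := ore_hbt σ'' δ' ι' Xb (fun p => hrel' p) hrep'
  refine ⟨hNoeth, σ', δ', ι', Xb, ?_, ?_, ?_, rfl, ?_, ?_, hrel', hrep'⟩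
  · intro p k
    rw [hσ'coe, coeff_map]
    rfl
  · intro p k
    rw [hδ'coe, derivePoly_coeff]
  · intro p k
    rw [hι'coe, coeff_map]
  · intro a b
    apply Subtype.ext
    show derivePoly δ ((a : Polynomial R) * (b : Polynomial R))
      = (a : Polynomial R).map (σ : R →+* R) * derivePoly δ (b : Polynomial R)
        + derivePoly δ (a : Polynomial R) * (b : Polynomial R)
    exact derivePoly_mul σ δ hδ _ _
  · intro p q hpq
    exact Subtype.ext (Polynomial.map_injective ι hinj (congrArg Subtype.val hpq))
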